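/- arXiv:1311.2973 — 8 statements merged into one kernel-verified Lean document; each statement's English description precedes it below -/
import Mathlib

section
/- Let B be a Boolean algebra, let g and h be unary join-hemimorphisms on B, and let c ∈ B. If g x ≤ h x holds for every x ∈ B with x ≤ c, then for all prime filters F and G of B such that c ∈ G and g a ∈ F for every a ∈ G, it also holds that h a ∈ F for every a ∈ G. (In the terminology of the Stone dual: if B satisfies the guarded axiom ∀x (x ≤ c → g(x) ≤ h(x)), then the dual relational space satisfies ∀F,G (G ∈ C ∧ r_g(F,G) → r_h(F,G)), where C(G) holds iff c ∈ G.) -/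
/-- A prime filter of a Boolean algebra. -/
def IsPrimeFilter {B : Type*} [BooleanAlgebra B] (F : Set B) : Prop :=
  ⊤ ∈ F ∧ ⊥ ∉ F ∧ (∀ x y : B, x ∈ F → x ≤ y → y ∈ F) ∧
    (∀ x y : B, x ∈ F → y ∈ F → x ⊓ y ∈ F) ∧
    (∀ x y : B, x ⊔ y ∈ F → x ∈ F ∨ y ∈ F)

/-- A unary join-hemimorphism. -/
def IsJoinHemi {B : Type*} [BooleanAlgebra B] (g : B → B) : Prop :=
  (∀ x y : B, g (x ⊔ y) = g x ⊔ g y) ∧ g ⊥ = ⊥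

theorem stmt_0 {B : Type*} [BooleanAlgebra B] (g h : B → B)
    (hg : IsJoinHemi g) (hh : IsJoinHemi h) (c : B)
    (hax : ∀ x : B, x ≤ c → g x ≤ h x)
    (F G : Set B) (hF : IsPrimeFilter F) (hG : IsPrimeFilter G)
    (hcG : c ∈ G) (hrg : ∀ a ∈ G, g a ∈ F) :
    ∀ a ∈ G, h a ∈ F := by
  intro a haG
  have hac : a ⊓ c ∈ G := hG.2.2.2.1 a c haG hcG
  have h1 : g (a ⊓ c) ∈ F := hrg _ hac
  have h2 : g (a ⊓ c) ≤ h (a ⊓ c) := hax _ inf_le_right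
  have hmono : h (a ⊓ c) ≤ h a := by
    have := hh.1 (a ⊓ c) a
    rw [sup_eq_right.mpr inf_le_left] at this
    rw [this]; exact le_sup_left
  exact hF.2.2.1 _ _ h1 (h2.trans hmono)
end

section
/- Let B be a Boolean algebra, let f, g and h be unary join-hemimorphisms on B, and let c ∈ B. If f(g x) ≤ h x holds for every x ∈ B with x ≤ c, then for all prime filters F and G of B such that c ∈ G and such that there exists a prime filter H with (f a ∈ F for every a ∈ H) and (g a ∈ H for every a ∈ G), it holds that h a ∈ F for every a ∈ G. (Dually: if B satisfies ∀x (x ≤ c → f(g(x)) ≤ h(x)), then the dual relational space satisfies ∀F,G (G ∈ C ∧ (r_f ∘ r_g)(F,G) → r_h(F,G)).) -/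
theorem stmt_1 {B : Type*} [BooleanAlgebra B] (f g h : B → B)
    (hf : IsJoinHemi f) (hg : IsJoinHemi g) (hh : IsJoinHemi h) (c : B)
    (hax : ∀ x : B, x ≤ c → f (g x) ≤ h x)
    (F G : Set B) (hF : IsPrimeFilter F) (hG : IsPrimeFilter G)
    (hcG : c ∈ G)
    (hcomp : ∃ H : Set B, IsPrimeFilter H ∧ (∀ a ∈ H, f a ∈ F) ∧ (∀ a ∈ G, g a ∈ H)) :
    ∀ a ∈ G, h a ∈ F := by
  intro a haG
  obtain ⟨H, hH, hHF, hGH⟩ := hcomp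
  have hac : a ⊓ c ∈ G := hG.2.2.2.1 a c haG hcG
  have h1 : g (a ⊓ c) ∈ H := hGH _ hac
  have h2 : f (g (a ⊓ c)) ∈ F := hHF _ h1
  have h3 : f (g (a ⊓ c)) ≤ h (a ⊓ c) := hax _ inf_le_right
  have hmono : h (a ⊓ c) ≤ h a := by
    have := hh.1 (a ⊓ c) a
    rw [sup_eq_right.mpr inf_le_left] at this
    rw [this]; exact le_sup_left
  exact hF.2.2.1 _ _ h2 (h3.trans hmono)
end

section
/- Let B be a Boolean algebra, let f and g be unary join-hemimorphisms on B, and let c ∈ B. If f(g x) ≤ x holds for every x ∈ B with x ≤ c, then for all prime filters F and G of B such that c ∈ G and such that there exists a prime filter H with (f a ∈ F for every a ∈ H) and (g a ∈ H for every a ∈ G), it follows that F = G. (Dually: if B satisfies ∀x (x ≤ c → f(g(x)) ≤ x), then the dual relational space satisfies ∀F,G (G ∈ C ∧ (r_f ∘ r_g)(F,G) → F = G).) -/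
theorem stmt_2 {B : Type*} [BooleanAlgebra B] (f g : B → B)
    (hf : IsJoinHemi f) (hg : IsJoinHemi g) (c : B)
    (hax : ∀ x : B, x ≤ c → f (g x) ≤ x)
    (F G : Set B) (hF : IsPrimeFilter F) (hG : IsPrimeFilter G)
    (hcG : c ∈ G)
    (hcomp : ∃ H : Set B, IsPrimeFilter H ∧ (∀ a ∈ H, f a ∈ F) ∧ (∀ a ∈ G, g a ∈ H)) :
    F = G := by
  obtain ⟨H, hH, hfH, hgG⟩ := hcomp
  obtain ⟨hGt, hGb, hGu, hGm, hGp⟩ := hG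
  obtain ⟨hFt, hFb, hFu, hFm, hFp⟩ := hF
  -- G ⊆ F
  have hsub : G ⊆ F := by
    intro a ha
    have hac : a ⊓ c ∈ G := hGm a c ha hcG
    have h1 : f (g (a ⊓ c)) ∈ F := hfH _ (hgG _ hac)
    exact hFu _ a h1 ((hax _ inf_le_right).trans inf_le_left)
  -- F ⊆ G by maximality
  apply Set.eq_of_subset_of_subset _ hsub
  intro x hx
  rcases hGp x xᶜ (by simpa using hGt) with h | h
  · exact h
  · exact absurd (by simpa using hFm x xᶜ hx (hsub h)) hFb
end

section
/- Let B be a Boolean algebra and let f, g, h be unary join-hemimorphisms on B. Then the following hold for all prime filters F, G of B: (1) if g x ≤ h x for all x ∈ B, then r_g(F,G) implies r_h(F,G); (2) if f(g x) ≤ h x for all x ∈ B, then (r_f ∘ r_g)(F,G) implies r_h(F,G); (3) if f(g x) ≤ x for all x ∈ B, then (r_f ∘ r_g)(F,G) implies F = G. -/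
/-- The canonical relation associated with a join-hemimorphism on the prime filters:
`rDual g F G` iff `g a ∈ F` for every `a ∈ G`. -/
def rDual {B : Type*} [BooleanAlgebra B] (g : B → B) (F G : Set B) : Prop :=
  ∀ a ∈ G, g a ∈ F

/-- Composition of the canonical relations via an intermediate prime filter. -/
def rDualComp {B : Type*} [BooleanAlgebra B] (f g : B → B) (F G : Set B) : Prop :=
  ∃ H : Set B, IsPrimeFilter H ∧ rDual f F H ∧ rDual g H G

theorem stmt_3 {B : Type*} [BooleanAlgebra B] (f g h : B → B)
    (hf : IsJoinHemi f) (hg : IsJoinHemi g) (hh : IsJoinHemi h)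
    (F G : Set B) (hF : IsPrimeFilter F) (hG : IsPrimeFilter G) :
    ((∀ x : B, g x ≤ h x) → rDual g F G → rDual h F G) ∧
    ((∀ x : B, f (g x) ≤ h x) → rDualComp f g F G → rDual h F G) ∧
    ((∀ x : B, f (g x) ≤ x) → rDualComp f g F G → F = G) := by
  obtain ⟨hFtop, hFbot, hFup, hFinf, hFpr⟩ := hF
  obtain ⟨hGtop, hGbot, hGup, hGinf, hGpr⟩ := hG
  refine ⟨fun hle hr a ha => hFup _ _ (hr a ha) (hle a), ?_, ?_⟩
  · rintro hle ⟨H, hH, hrf, hrg⟩ a ha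
    exact hFup _ _ (hrf _ (hrg a ha)) (hle a)
  · rintro hle ⟨H, hH, hrf, hrg⟩
    have hGF : ∀ a ∈ G, a ∈ F := fun a ha => hFup _ _ (hrf _ (hrg a ha)) (hle a)
    apply Set.eq_of_subset_of_subset _ hGF
    intro a ha
    rcases hGpr a aᶜ (by simpa using hGtop) with h1 | h1
    · exact h1
    · exact absurd (by simpa using hFinf _ _ ha (hGF _ h1)) hFbot
end

section
/- Let B be a Boolean algebra, let g, h : (Fin n → B) → B be join-hemimorphisms in each argument, and let c : Fin n → B. If g x ≤ h x holds for every tuple x : Fin n → B with x i ≤ c i for all i, then for every prime filter F of B and every family G : Fin n → Set B of prime filters of B such that c i ∈ G i for every i and such that g a ∈ F for every tuple a : Fin n → B with a i ∈ G i for all i, it also holds that h a ∈ F for every tuple a : Fin n → B with a i ∈ G i for all i. -/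
/-- A map `(Fin n → B) → B` which is a join-hemimorphism in each argument. -/
def IsJoinHemiN {B : Type*} [BooleanAlgebra B] {n : ℕ} (g : (Fin n → B) → B) : Prop :=
  (∀ (i : Fin n) (x : Fin n → B) (a b : B),
      g (Function.update x i (a ⊔ b)) =
        g (Function.update x i a) ⊔ g (Function.update x i b)) ∧
  (∀ (i : Fin n) (x : Fin n → B), x i = ⊥ → g x = ⊥)

lemma joinHemi_mono_update {B : Type*} [BooleanAlgebra B] {n : ℕ}
    {h : (Fin n → B) → B} (hh : IsJoinHemiN h) (i : Fin n) (x : Fin n → B)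
    {a b : B} (hab : a ≤ b) :
    h (Function.update x i a) ≤ h (Function.update x i b) := by
  have := hh.1 i x a b
  rw [sup_eq_right.mpr hab] at this
  rw [this]
  exact le_sup_left

lemma joinHemi_mono_aux {B : Type*} [BooleanAlgebra B] {n : ℕ}
    {h : (Fin n → B) → B} (hh : IsJoinHemiN h) (s : Finset (Fin n)) :
    ∀ x y : Fin n → B, (∀ i, x i ≤ y i) → (∀ i ∉ s, x i = y i) → h x ≤ h y := by
  induction s using Finset.induction_on with
  | empty =>
    intro x y _ heq
    have : x = y := funext fun i => heq i (Finset.notMem_empty i)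
    rw [this]
  | insert i s hni ih =>
    intro x y hle heq
    set z := Function.update x i (y i) with hz
    have h1 : h x ≤ h z := by
      have hx : x = Function.update x i (x i) := by
        simp [Function.update_eq_self]
      calc h x = h (Function.update x i (x i)) := by rw [← hx]
        _ ≤ h z := joinHemi_mono_update hh i x (hle i)
    have h2 : h z ≤ h y := by
      apply ih
      · intro j
        by_cases hj : j = i
        · subst hj; simp [hz]
        · simp [hz, Function.update_of_ne hj]; exact hle j
      · intro j hj
        by_cases hij : j = i
        · subst hij; simp [hz]
        · rw [hz, Function.update_of_ne hij]
          exact heq j (by simp [hij, hj])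
    exact le_trans h1 h2

lemma joinHemi_mono {B : Type*} [BooleanAlgebra B] {n : ℕ}
    {h : (Fin n → B) → B} (hh : IsJoinHemiN h) {x y : Fin n → B}
    (hle : ∀ i, x i ≤ y i) : h x ≤ h y :=
  joinHemi_mono_aux hh Finset.univ x y hle (fun i hi => absurd (Finset.mem_univ i) hi)

theorem stmt_4 {B : Type*} [BooleanAlgebra B] {n : ℕ}
    (g h : (Fin n → B) → B) (hg : IsJoinHemiN g) (hh : IsJoinHemiN h)
    (c : Fin n → B)
    (hax : ∀ x : Fin n → B, (∀ i, x i ≤ c i) → g x ≤ h x)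
    (F : Set B) (hF : IsPrimeFilter F)
    (G : Fin n → Set B) (hG : ∀ i, IsPrimeFilter (G i))
    (hcG : ∀ i, c i ∈ G i)
    (hrg : ∀ a : Fin n → B, (∀ i, a i ∈ G i) → g a ∈ F) :
    ∀ a : Fin n → B, (∀ i, a i ∈ G i) → h a ∈ F := by
  intro a ha
  set x : Fin n → B := fun i => a i ⊓ c i with hx
  have hxG : ∀ i, x i ∈ G i := fun i => (hG i).2.2.2.1 _ _ (ha i) (hcG i)
  have hgx : g x ∈ F := hrg x hxG
  have hgh : g x ≤ h x := hax x (fun i => inf_le_right)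
  have hhx : h x ∈ F := hF.2.2.1 _ _ hgx hgh
  exact hF.2.2.1 _ _ hhx (joinHemi_mono hh (fun i => inf_le_left))
end

section
/- Let B be a Boolean algebra, let f : (Fin n → B) → B be a join-hemimorphism in each argument, let g₁, …, gₙ : B → B be unary join-hemimorphisms, and let c ∈ B. If f(g₁ x, …, gₙ x) ≤ x holds for every x ∈ B with x ≤ c, then for all prime filters F and G of B such that c ∈ G and such that there exists a family H : Fin n → Set B of prime filters with (gᵢ a ∈ H i for every i and every a ∈ G) and (f b ∈ F for every tuple b : Fin n → B with b i ∈ H i for all i), it follows that F = G. -/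
theorem stmt_5 {B : Type*} [BooleanAlgebra B] {n : ℕ}
    (f : (Fin n → B) → B) (hf : IsJoinHemiN f)
    (g : Fin n → B → B) (hg : ∀ i, IsJoinHemi (g i))
    (c : B)
    (hax : ∀ x : B, x ≤ c → f (fun i => g i x) ≤ x)
    (F G : Set B) (hF : IsPrimeFilter F) (hG : IsPrimeFilter G)
    (hcG : c ∈ G)
    (hcomp : ∃ H : Fin n → Set B, (∀ i, IsPrimeFilter (H i)) ∧
      (∀ (i : Fin n), ∀ a ∈ G, g i a ∈ H i) ∧
      (∀ b : Fin n → B, (∀ i, b i ∈ H i) → f b ∈ F)) :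
    F = G := by
  obtain ⟨H, hH, hgH, hfF⟩ := hcomp
  obtain ⟨hGtop, hGbot, hGup, hGinf, hGprime⟩ := hG
  obtain ⟨hFtop, hFbot, hFup, hFinf, hFprime⟩ := hF
  -- G ⊆ F
  have hGF : G ⊆ F := by
    intro a haG
    have hacG : a ⊓ c ∈ G := hGinf a c haG hcG
    have hb : ∀ i, g i (a ⊓ c) ∈ H i := fun i => hgH i _ hacG
    have hfb : f (fun i => g i (a ⊓ c)) ∈ F := hfF _ hb
    have hle : f (fun i => g i (a ⊓ c)) ≤ a :=
      (hax (a ⊓ c) inf_le_right).trans inf_le_left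
    exact hFup _ a hfb hle
  ext a
  constructor
  · intro haF
    by_contra haG
    have : a ⊔ aᶜ ∈ G := by rw [sup_compl_eq_top]; exact hGtop
    rcases hGprime a aᶜ this with h | h
    · exact haG h
    · have : a ⊓ aᶜ ∈ F := hFinf a aᶜ haF (hGF h)
      rw [inf_compl_eq_bot] at this
      exact hFbot this
  · exact fun h => hGF h
end

section
/- Let S be a partially ordered set and let f, g, h : S → S satisfy: for all x, y ∈ S, if y ≤ g(x) then f(y) ≤ h(x). Define f̄, ḡ, h̄ : LowerSet S → LowerSet S by f̄(U) = lowerClosure (f '' U), and analogously for ḡ and h̄. Then for all lower sets U, V of S, if U ≤ ḡ(V) then f̄(U) ≤ h̄(V). (The flattened composition axiom ∀x,y (y ≤ g(x) → f(y) ≤ h(x)) is preserved when passing from S to its lattice of lower sets with the canonically extended operators.) -/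
theorem stmt_16 {S : Type*} [PartialOrder S] (f g h : S → S)
    (hax : ∀ x y : S, y ≤ g x → f y ≤ h x) :
    ∀ U V : LowerSet S,
      U ≤ lowerClosure (g '' (V : Set S)) →
        lowerClosure (f '' (U : Set S)) ≤ lowerClosure (h '' (V : Set S)) := by
  intro U V hUV
  rw [lowerClosure_le]
  rintro _ ⟨u, hu, rfl⟩
  obtain ⟨_, ⟨v, hv, rfl⟩, hle⟩ := hUV hu
  exact ⟨h v, ⟨v, hv, rfl⟩, hax v u hle⟩
end

section
/- Let S be a partially ordered set and let f, g : S → S satisfy: for all x, y ∈ S, if y ≤ g(x) then f(y) ≤ x. Define f̄, ḡ : LowerSet S → LowerSet S by f̄(U) = lowerClosure (f '' U) and ḡ(U) = lowerClosure (g '' U). Then for all lower sets U, V of S, if U ≤ ḡ(V) then f̄(U) ≤ V. (The flattened role-inverse axiom ∀x,y (y ≤ g(x) → f(y) ≤ x) is preserved when passing from S to its lattice of lower sets with the canonically extended operators.) -/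
theorem stmt_17 {S : Type*} [PartialOrder S] (f g : S → S)
    (hax : ∀ x y : S, y ≤ g x → f y ≤ x) :
    ∀ U V : LowerSet S,
      U ≤ lowerClosure (g '' (V : Set S)) →
        lowerClosure (f '' (U : Set S)) ≤ V := by
  intro U V h
  rw [lowerClosure_le]
  rintro _ ⟨u, hu, rfl⟩
  obtain ⟨_, ⟨v, hv, rfl⟩, huv⟩ := h hu
  exact V.lower (hax v u huv) hv
end
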